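/- Let A, B ∈ ℂ[z] be nonconstant polynomials and L₁, L₂ ∈ ℂ[z,1/z] be nonconstant Laurent polynomials with A ∘ L₁ = B ∘ L₂. Assume deg A = deg B. Then either (i) there exist complex numbers a ≠ 0 and b such that, for the degree-one polynomial w(z) = az + b, one has A = B ∘ w and L₂ = w ∘ L₁ = a·L₁ + b; or (ii) there exist an integer r ≥ 1, a nonzero complex number a, a root of unity ν, and degree-one polynomials w₁, w₂ ∈ ℂ[z] such that w₁ ∘ L₁ = a^r·z^r + a^{−r}·z^{−r} and w₂ ∘ L₂ = (aν)^r·z^r + (aν)^{−r}·z^{−r}. -/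

import Mathlib

open Polynomial LaurentPolynomial

open Polynomial LaurentPolynomial HahnSeries

instance : CoeFun (LaurentPolynomial ℂ) (fun _ => ℤ → ℂ) := ⟨fun L => L.coeff⟩


noncomputable section

abbrev KK := LaurentSeries ℂ


noncomputable def eeM : Multiplicative ℤ →* LaurentSeries ℂ where
  toFun n := HahnSeries.single (Multiplicative.toAdd n) 1
  map_one' := by simp [HahnSeries.single_zero_one]
  map_mul' a b := by simp [HahnSeries.single_mul_single]

noncomputable def ee : LaurentPolynomial ℂ →ₐ[ℂ] LaurentSeries ℂ :=
  AddMonoidAlgebra.lift ℂ _ ℤ eeM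

lemma ee_apply (L : LaurentPolynomial ℂ) :
    ee L = L.coeff.sum fun a b => HahnSeries.single a b := by
  rw [ee, AddMonoidAlgebra.lift_apply]
  refine Finsupp.sum_congr fun a ha => ?_
  have h1 : eeM (Multiplicative.ofAdd a) = HahnSeries.single a (1:ℂ) := rfl
  rw [Algebra.smul_def, h1, HahnSeries.algebraMap_apply', ← PowerSeries.C_eq_algebraMap,
    HahnSeries.ofPowerSeries_C, HahnSeries.C_apply, HahnSeries.single_mul_single,
    zero_add, mul_one]

lemma ee_coeff (L : LaurentPolynomial ℂ) (k : ℤ) : (ee L).coeff k = L k := by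
  classical
  have : (ee L).coeff k =
      (HahnSeries.coeff.addMonoidHom k) (L.coeff.sum fun a b => HahnSeries.single a b) := by
    rw [ee_apply]; rfl
  rw [this, map_finsuppSum]
  show (L.coeff.sum fun a b => (HahnSeries.single a b).coeff k) = L k
  simp only [HahnSeries.coeff_single]
  rw [Finsupp.sum, Finset.sum_eq_single k]
  · simp
  · intro x hx hxk; exact if_neg fun h => hxk h.symm
  · intro hk; simp [Finsupp.notMem_support_iff.mp hk]

lemma algC (c : ℂ) : algebraMap ℂ KK c = HahnSeries.single 0 c := by
  rw [HahnSeries.algebraMap_apply', ← PowerSeries.C_eq_algebraMap, HahnSeries.ofPowerSeries_C,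
    HahnSeries.C_apply]

lemma algC_coeff (c : ℂ) (k : ℤ) :
    (algebraMap ℂ KK c).coeff k = if k = 0 then c else 0 := by
  rw [algC, HahnSeries.coeff_single]
  split <;> rfl

lemma mulC_coeff (c : ℂ) (x : KK) (k : ℤ) :
    (algebraMap ℂ KK c * x).coeff k = c * x.coeff k := by
  rw [algC, mul_comm, HahnSeries.coeff_mul_single_zero, mul_comm]

lemma le_order_of_vanish {x : KK} {e : ℤ} (hx : x ≠ 0) (h : ∀ k < e, x.coeff k = 0) :
    e ≤ x.order := by
  by_contra hlt
  exact (mt HahnSeries.coeff_order_eq_zero.mp hx) (h _ (lt_of_not_ge hlt))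

lemma order_eq_of_coeff {x : KK} {e : ℤ} (h1 : x.coeff e ≠ 0) (h2 : ∀ k < e, x.coeff k = 0) :
    x.order = e := by
  have hx : x ≠ 0 := HahnSeries.ne_zero_of_coeff_ne_zero h1
  exact le_antisymm (HahnSeries.order_le_of_coeff_ne_zero h1) (le_order_of_vanish hx h2)

lemma lc_mul {x y : KK} (hx : x ≠ 0) (hy : y ≠ 0) :
    (x * y).leadingCoeff = x.leadingCoeff * y.leadingCoeff := by
  rw [HahnSeries.leadingCoeff_eq, HahnSeries.order_mul hx hy,
    HahnSeries.coeff_mul_order_add_order, HahnSeries.leadingCoeff_eq, HahnSeries.leadingCoeff_eq]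

lemma lc_pow {x : KK} (hx : x ≠ 0) (i : ℕ) : (x ^ i).leadingCoeff = x.leadingCoeff ^ i := by
  induction i with
  | zero => simp [HahnSeries.leadingCoeff_eq, HahnSeries.coeff_one]
  | succ j ih => rw [pow_succ, lc_mul (pow_ne_zero j hx) hx, ih, pow_succ]

lemma order_pow' {x : KK} (hx : x ≠ 0) (i : ℕ) : (x ^ i).order = (i : ℤ) * x.order := by
  rw [HahnSeries.order_pow]
  simp [zsmul_eq_mul]

lemma aeval_coeff (Q : ℂ[X]) (M : KK) (k : ℤ) :
    (Polynomial.aeval M Q).coeff k = ∑ i ∈ Q.support, Q.coeff i * (M ^ i).coeff k := by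
  classical
  conv_lhs => rw [Q.as_sum_support_C_mul_X_pow]
  rw [map_sum]
  have : ((∑ i ∈ Q.support, Polynomial.aeval M (Polynomial.C (Q.coeff i) * X ^ i))).coeff k
      = ∑ i ∈ Q.support, (Polynomial.aeval M (Polynomial.C (Q.coeff i) * X ^ i)).coeff k := by
    exact map_sum (HahnSeries.coeff.addMonoidHom k) _ _
  rw [this]
  refine Finset.sum_congr rfl fun i _ => ?_
  rw [map_mul, map_pow, Polynomial.aeval_C, Polynomial.aeval_X, mulC_coeff]

lemma coeff_aeval_lt (Q : ℂ[X]) (M : KK) (hM : M.order < 0) (m : ℤ)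
    (hQ : ∀ i : ℕ, Q.coeff i ≠ 0 → (i : ℤ) ≤ m) :
    ∀ k < m * M.order, (Polynomial.aeval M Q).coeff k = 0 := by
  intro k hk
  have hM0 : M ≠ 0 := fun h => by simp [h, HahnSeries.order_zero] at hM
  rw [aeval_coeff]
  refine Finset.sum_eq_zero fun i hi => ?_
  have hci : Q.coeff i ≠ 0 := Polynomial.mem_support_iff.mp hi
  have h1 : (i : ℤ) ≤ m := hQ i hci
  have h2 : m * M.order ≤ (i : ℤ) * M.order := by
    exact mul_le_mul_of_nonpos_right h1 (le_of_lt hM)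
  have : (M ^ i).coeff k = 0 := by
    apply HahnSeries.coeff_eq_zero_of_lt_order
    rw [order_pow' hM0]
    exact lt_of_lt_of_le hk h2
  rw [this, mul_zero]

lemma coeff_aeval_lead (Q : ℂ[X]) (M : KK) (hM : M.order < 0) :
    (Polynomial.aeval M Q).coeff ((Q.natDegree : ℤ) * M.order)
      = Q.leadingCoeff * M.leadingCoeff ^ Q.natDegree := by
  classical
  have hM0 : M ≠ 0 := fun h => by simp [h, HahnSeries.order_zero] at hM
  by_cases hQ0 : Q = 0
  · simp [hQ0]
  rw [aeval_coeff]
  rw [Finset.sum_eq_single Q.natDegree]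
  · rw [← order_pow' hM0 Q.natDegree, ← HahnSeries.leadingCoeff_eq, lc_pow hM0]
    rfl
  · intro i hi hne
    have hilt : i < Q.natDegree :=
      lt_of_le_of_ne (Polynomial.le_natDegree_of_ne_zero (Polynomial.mem_support_iff.mp hi)) hne
    have : ((Q.natDegree : ℤ)) * M.order < (i : ℤ) * M.order := by
      apply (mul_lt_mul_right_of_neg hM).mpr
      exact_mod_cast hilt
    have hz : (M ^ i).coeff ((Q.natDegree : ℤ) * M.order) = 0 := by
      apply HahnSeries.coeff_eq_zero_of_lt_order
      rw [order_pow' hM0]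
      exact this
    rw [hz, mul_zero]
  · intro hns
    exact absurd (Polynomial.mem_support_iff.mpr (Polynomial.leadingCoeff_ne_zero.mpr hQ0)) hns

lemma coeff_aeval_nonneg (Q : ℂ[X]) (M : KK) (hM : 0 ≤ M.order) :
    ∀ k < 0, (Polynomial.aeval M Q).coeff k = 0 := by
  intro k hk
  rw [aeval_coeff]
  refine Finset.sum_eq_zero fun i hi => ?_
  by_cases hM0 : M = 0
  · subst hM0
    by_cases hi0 : i = 0
    · subst hi0; simp [HahnSeries.coeff_one, hk.ne]
    · simp [zero_pow hi0]
  · have : (M ^ i).coeff k = 0 := by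
      apply HahnSeries.coeff_eq_zero_of_lt_order
      rw [order_pow' hM0]
      calc k < 0 := hk
        _ ≤ (i : ℤ) * M.order := mul_nonneg (Int.natCast_nonneg i) hM
    rw [this, mul_zero]

lemma order_prod {ι : Type*} (s : Finset ι) (g : ι → KK) (h : ∀ i ∈ s, g i ≠ 0) :
    (∏ i ∈ s, g i).order = ∑ i ∈ s, (g i).order := by
  classical
  induction s using Finset.cons_induction with
  | empty => simp [HahnSeries.order_one]
  | cons a s ha ih =>
    rw [Finset.prod_cons, Finset.sum_cons,
      HahnSeries.order_mul (h a (Finset.mem_cons_self a s)) ?_, ih ?_]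
    · intro i hi; exact h i (Finset.mem_cons_of_mem hi)
    · exact Finset.prod_ne_zero_iff.mpr fun i hi => h i (Finset.mem_cons_of_mem hi)

lemma sub_top_two (Q : ℂ[X]) (n : ℕ) (hn : 1 ≤ n) (hQn : Q.natDegree = n) :
    ∀ i : ℕ,
      (Q - Polynomial.C Q.leadingCoeff *
          (X + Polynomial.C (Q.coeff (n - 1) / ((n : ℂ) * Q.leadingCoeff))) ^ n).coeff i ≠ 0 →
        (i : ℤ) ≤ (n : ℤ) - 2 := by
  intro i hi
  by_contra hgt
  push_neg at hgt
  have hQ0 : Q ≠ 0 := fun h => by simp [h, Polynomial.natDegree_zero] at hQn; omega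
  have hlc : Q.leadingCoeff ≠ 0 := Polynomial.leadingCoeff_ne_zero.mpr hQ0
  have hnlc : (n : ℂ) * Q.leadingCoeff ≠ 0 := by
    apply mul_ne_zero _ hlc
    exact_mod_cast Nat.cast_ne_zero.mpr (by omega)
  set t : ℂ := Q.coeff (n - 1) / ((n : ℂ) * Q.leadingCoeff) with ht
  rw [Polynomial.coeff_sub, Polynomial.coeff_C_mul, Polynomial.coeff_X_add_C_pow] at hi
  have hge : n - 1 ≤ i := by omega
  rcases Nat.lt_or_ge i n with hlt | hge2
  · have hieq : i = n - 1 := by omega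
    subst hieq
    have h1 : n - (n - 1) = 1 := by omega
    rw [h1] at hi
    have h2 : n.choose (n - 1) = n := by
      rw [Nat.choose_symm hn, Nat.choose_one_right]
    rw [h2, pow_one, ht] at hi
    apply hi
    have hnC : (n:ℂ) ≠ 0 := by exact_mod_cast (show n ≠ 0 by omega)
    field_simp
    ring
  · rcases Nat.eq_or_lt_of_le hge2 with hieq | hgt2
    · subst hieq
      simp [Nat.sub_self, Polynomial.leadingCoeff, hQn] at hi
    · have h1 : Q.coeff i = 0 := Polynomial.coeff_eq_zero_of_natDegree_lt (by omega)
      have h2 : n.choose i = 0 := Nat.choose_eq_zero_of_lt hgt2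
      rw [h1, h2] at hi
      simp at hi
lemma root_lemma {n : ℕ} (hn : 1 ≤ n) {A B : ℂ[X]} (hAn : A.natDegree = n)
    (hBn : B.natDegree = n) {M N : KK} (hM : M.order < 0)
    (heq : Polynomial.aeval M A = Polynomial.aeval N B) :
    N ≠ 0 ∧ N.order = M.order ∧
      ∃ α β : ℂ, α ≠ 0 ∧ β ≠ 0 ∧ α ^ n = A.leadingCoeff ∧ β ^ n = B.leadingCoeff ∧
        ∀ k : ℤ, k ≠ 0 → k < -M.order → α * M.coeff k = β * N.coeff k := by
  classical
  have hM0 : M ≠ 0 := fun h => by simp [h, HahnSeries.order_zero] at hM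
  have hA0 : A ≠ 0 := fun h => by rw [h, Polynomial.natDegree_zero] at hAn; omega
  have hB0 : B ≠ 0 := fun h => by rw [h, Polynomial.natDegree_zero] at hBn; omega
  have hlcA : A.leadingCoeff ≠ 0 := Polynomial.leadingCoeff_ne_zero.mpr hA0
  have hlcB : B.leadingCoeff ≠ 0 := Polynomial.leadingCoeff_ne_zero.mpr hB0
  have hlcM : M.leadingCoeff ≠ 0 := HahnSeries.leadingCoeff_ne_zero.mpr hM0
  have hnpos : (0:ℤ) < (n:ℤ) := by exact_mod_cast hn
  have hno : (n:ℤ) * M.order < 0 := mul_neg_of_pos_of_neg hnpos hM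
  have hFlead : (Polynomial.aeval M A).coeff ((n : ℤ) * M.order) ≠ 0 := by
    rw [show ((n:ℤ)) = ((A.natDegree : ℤ)) by rw [hAn], coeff_aeval_lead A M hM]
    exact mul_ne_zero hlcA (pow_ne_zero _ hlcM)
  have hNneg : N.order < 0 := by
    by_contra hge
    push_neg at hge
    have := coeff_aeval_nonneg B N hge ((n:ℤ) * M.order) hno
    rw [← heq] at this
    exact hFlead this
  have hN0 : N ≠ 0 := fun h => by simp [h, HahnSeries.order_zero] at hNneg
  have hlcN : N.leadingCoeff ≠ 0 := HahnSeries.leadingCoeff_ne_zero.mpr hN0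
  have hvanA : ∀ k < (n:ℤ) * M.order, (Polynomial.aeval M A).coeff k = 0 :=
    coeff_aeval_lt A M hM n fun i hi => by
      exact_mod_cast Polynomial.le_natDegree_of_ne_zero hi |>.trans hAn.le
  have hvanB : ∀ k < (n:ℤ) * N.order, (Polynomial.aeval N B).coeff k = 0 :=
    coeff_aeval_lt B N hNneg n fun i hi => by
      exact_mod_cast Polynomial.le_natDegree_of_ne_zero hi |>.trans hBn.le
  have hGlead : (Polynomial.aeval N B).coeff ((n : ℤ) * N.order) ≠ 0 := by
    rw [show ((n:ℤ)) = ((B.natDegree : ℤ)) by rw [hBn], coeff_aeval_lead B N hNneg]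
    exact mul_ne_zero hlcB (pow_ne_zero _ hlcN)
  have hordeq : N.order = M.order := by
    rcases lt_trichotomy N.order M.order with hlt | heq' | hgt
    · exfalso
      have h1 : (n:ℤ) * N.order < (n:ℤ) * M.order := by
        exact mul_lt_mul_of_pos_left hlt hnpos
      have := hvanA ((n:ℤ) * N.order) h1
      rw [heq] at this
      exact hGlead this
    · exact heq'
    · exfalso
      have h1 : (n:ℤ) * M.order < (n:ℤ) * N.order := by
        exact mul_lt_mul_of_pos_left hgt hnpos
      have := hvanB ((n:ℤ) * M.order) h1
      rw [← heq] at this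
      exact hFlead this
  refine ⟨hN0, hordeq, ?_⟩
  set o : ℤ := M.order with ho
  -- the top-two-coefficients normalization
  set tA : ℂ := A.coeff (n - 1) / ((n : ℂ) * A.leadingCoeff) with htA
  set tB : ℂ := B.coeff (n - 1) / ((n : ℂ) * B.leadingCoeff) with htB
  set GA : ℂ[X] := Polynomial.C A.leadingCoeff * (X + Polynomial.C tA) ^ n with hGA
  set GB : ℂ[X] := Polynomial.C B.leadingCoeff * (X + Polynomial.C tB) ^ n with hGB
  have hEA : ∀ k < ((n:ℤ) - 2) * o, (Polynomial.aeval M (A - GA)).coeff k = 0 :=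
    coeff_aeval_lt _ M hM ((n:ℤ) - 2) (sub_top_two A n hn hAn)
  have hEB : ∀ k < ((n:ℤ) - 2) * o, (Polynomial.aeval N (B - GB)).coeff k = 0 := by
    intro k hk
    refine coeff_aeval_lt _ N hNneg ((n:ℤ) - 2) (sub_top_two B n hn hBn) k ?_
    rw [hordeq]; exact hk
  set P : KK := Polynomial.aeval M GA - Polynomial.aeval N GB with hP
  have hPvan : ∀ k < ((n:ℤ) - 2) * o, P.coeff k = 0 := by
    intro k hk
    have h1 : P = Polynomial.aeval N (B - GB) - Polynomial.aeval M (A - GA) := by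
      rw [hP, map_sub, map_sub, ← heq]; ring
    rw [h1, HahnSeries.coeff_sub, hEA k hk, hEB k hk, sub_zero]
  -- roots
  obtain ⟨α₀, hα₀⟩ := IsAlgClosed.exists_pow_nat_eq A.leadingCoeff (show 0 < n by omega)
  obtain ⟨β₀, hβ₀⟩ := IsAlgClosed.exists_pow_nat_eq B.leadingCoeff (show 0 < n by omega)
  have hα₀0 : α₀ ≠ 0 := fun h => hlcA (by rw [← hα₀, h, zero_pow (by omega)])
  have hβ₀0 : β₀ ≠ 0 := fun h => hlcB (by rw [← hβ₀, h, zero_pow (by omega)])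
  set M₁ : KK := M + algebraMap ℂ KK tA with hM₁
  set N₁ : KK := N + algebraMap ℂ KK tB with hN₁
  set x : KK := algebraMap ℂ KK α₀ * M₁ with hx
  set y : KK := algebraMap ℂ KK β₀ * N₁ with hy
  have hPxy : P = x ^ n - y ^ n := by
    rw [hP, hx, hy, mul_pow, mul_pow, ← map_pow, ← map_pow, hα₀, hβ₀, hGA, hGB]
    simp only [map_mul, map_pow, map_add, Polynomial.aeval_C, Polynomial.aeval_X]
    rfl
  -- primitive roots and factorization
  have hn0 : n ≠ 0 := by omega
  have hμ := Complex.isPrimitiveRoot_exp n hn0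
  have hinj : Function.Injective (algebraMap ℂ KK) := (algebraMap ℂ KK).injective
  have hμK : IsPrimitiveRoot (algebraMap ℂ KK (Complex.exp (2 * Real.pi * Complex.I / n))) n :=
    hμ.map_of_injective hinj
  have hfact : x ^ n - y ^ n =
      ∏ ζ ∈ Polynomial.nthRootsFinset n (1:KK), (x - ζ * y) :=
    hμK.pow_sub_pow_eq_prod_sub_mul x y (by omega)
  have himg : Polynomial.nthRootsFinset n (1:KK)
      = (Polynomial.nthRootsFinset n (1:ℂ)).image (algebraMap ℂ KK) := by
    symm
    apply Finset.eq_of_subset_of_card_le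
    · intro z hz
      obtain ⟨c, hc, rfl⟩ := Finset.mem_image.mp hz
      exact Polynomial.map_mem_nthRootsFinset_one hc _
    · rw [Finset.card_image_of_injective _ hinj, hμ.card_nthRootsFinset,
        hμK.card_nthRootsFinset]
  set f : ℂ → KK := fun c => x - algebraMap ℂ KK c * y with hf
  have hPfact : P = ∏ c ∈ Polynomial.nthRootsFinset n (1:ℂ), f c := by
    rw [hPxy, hfact, himg, Finset.prod_image fun a _ b _ hab => hinj hab]
  have hfcoeff : ∀ (c : ℂ) (k : ℤ), k ≠ 0 →
      (f c).coeff k = α₀ * M.coeff k - c * (β₀ * N.coeff k) := by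
    intro c k hk
    show (x - algebraMap ℂ KK c * y).coeff k = _
    rw [HahnSeries.coeff_sub, hx, hy, mulC_coeff, mulC_coeff, mulC_coeff, hM₁, hN₁,
      HahnSeries.coeff_add, HahnSeries.coeff_add, algC_coeff, algC_coeff, if_neg hk, if_neg hk,
      add_zero, add_zero]
  have hflow : ∀ (c : ℂ), ∀ k < o, (f c).coeff k = 0 := by
    intro c k hk
    have hk0 : k ≠ 0 := by omega
    have h1 : M.coeff k = 0 := HahnSeries.coeff_eq_zero_of_lt_order hk
    have h2 : N.coeff k = 0 := HahnSeries.coeff_eq_zero_of_lt_order (by rw [hordeq]; exact hk)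
    rw [hfcoeff c k hk0, h1, h2]
    ring
  by_cases hex : ∃ c ∈ Polynomial.nthRootsFinset n (1:ℂ), f c = 0
  · obtain ⟨c, hcS, hfc⟩ := hex
    have hc1 : c ^ n = 1 := (Polynomial.mem_nthRootsFinset (by omega) 1).mp hcS
    have hc0 : c ≠ 0 := fun h => by rw [h, zero_pow hn0] at hc1; exact zero_ne_one hc1
    refine ⟨α₀, c * β₀, hα₀0, mul_ne_zero hc0 hβ₀0, hα₀,
      by rw [mul_pow, hc1, one_mul, hβ₀], ?_⟩
    intro k hk0 _
    have h2 : (f c).coeff k = 0 := by rw [hfc, HahnSeries.coeff_zero]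
    rw [hfcoeff c k hk0] at h2
    linear_combination h2
  · push_neg at hex
    have hPne : P ≠ 0 := by
      rw [hPfact]
      exact Finset.prod_ne_zero_iff.mpr hex
    have hProd : P.order = ∑ c ∈ Polynomial.nthRootsFinset n (1:ℂ), (f c).order := by
      rw [hPfact]; exact order_prod _ _ hex
    have hPord : ((n:ℤ) - 2) * o ≤ P.order := le_order_of_vanish hPne hPvan
    have hlow : ∀ c ∈ Polynomial.nthRootsFinset n (1:ℂ), o ≤ (f c).order := fun c hc =>
      le_order_of_vanish (hex c hc) (hflow c)
    have hcard : (Polynomial.nthRootsFinset n (1:ℂ)).card = n := hμ.card_nthRootsFinset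
    have hone : ∃ c₁ ∈ Polynomial.nthRootsFinset n (1:ℂ), o + 1 ≤ (f c₁).order := by
      by_contra hno2
      push_neg at hno2
      have hall : ∀ c ∈ Polynomial.nthRootsFinset n (1:ℂ), (f c).order = o := fun c hc =>
        le_antisymm (by have := hno2 c hc; omega) (hlow c hc)
      have hPo : P.order = (n : ℤ) * o := by
        rw [hProd, Finset.sum_congr rfl hall, Finset.sum_const, hcard, nsmul_eq_mul]
      rw [hPo] at hPord
      have hx2 : ((n:ℤ)) * o = ((n:ℤ) - 2) * o + 2 * o := by ring
      linarith
    obtain ⟨c₁, hc₁S, hc₁⟩ := hone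
    have huniq : ∀ c ∈ Polynomial.nthRootsFinset n (1:ℂ), c ≠ c₁ → (f c).order = o := by
      intro c hc hne
      refine le_antisymm ?_ (hlow c hc)
      by_contra hgt
      push_neg at hgt
      have hz1 : (f c).coeff o = 0 := HahnSeries.coeff_eq_zero_of_lt_order hgt
      have hz2 : (f c₁).coeff o = 0 := HahnSeries.coeff_eq_zero_of_lt_order (by omega)
      have ho0 : o ≠ 0 := by omega
      have e1 := hfcoeff c o ho0
      have e2 := hfcoeff c₁ o ho0
      rw [hz1] at e1
      rw [hz2] at e2
      have hNo : N.coeff o ≠ 0 := by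
        have := (mt HahnSeries.coeff_order_eq_zero.mp hN0)
        rwa [hordeq] at this
      have hzz : (c₁ - c) * (β₀ * N.coeff o) = 0 := by linear_combination e2 - e1
      rcases mul_eq_zero.mp hzz with h | h
      · exact hne (sub_eq_zero.mp h).symm
      · exact absurd h (mul_ne_zero hβ₀0 hNo)
    have hsum : ∑ c ∈ Polynomial.nthRootsFinset n (1:ℂ), (f c).order
        = (f c₁).order + ((n:ℤ) - 1) * o := by
      rw [← Finset.add_sum_erase _ _ hc₁S]
      congr 1
      rw [Finset.sum_congr rfl (fun c hc => huniq c (Finset.mem_of_mem_erase hc)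
        (Finset.ne_of_mem_erase hc)), Finset.sum_const, Finset.card_erase_of_mem hc₁S, hcard,
        nsmul_eq_mul, Nat.cast_sub hn, Nat.cast_one]
    have hdle : -o ≤ (f c₁).order := by
      rw [hProd, hsum] at hPord
      have hx2 : ((n:ℤ) - 2) * o = ((n:ℤ) - 1) * o - o := by ring
      linarith
    have hc1n : c₁ ^ n = 1 := (Polynomial.mem_nthRootsFinset (by omega) 1).mp hc₁S
    have hc10 : c₁ ≠ 0 := fun h => by rw [h, zero_pow hn0] at hc1n; exact zero_ne_one hc1n
    refine ⟨α₀, c₁ * β₀, hα₀0, mul_ne_zero hc10 hβ₀0, hα₀,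
      by rw [mul_pow, hc1n, one_mul, hβ₀], ?_⟩
    intro k hk0 hkd
    have hz : (f c₁).coeff k = 0 :=
      HahnSeries.coeff_eq_zero_of_lt_order (lt_of_lt_of_le hkd hdle)
    rw [hfcoeff c₁ k hk0] at hz
    linear_combination hz

lemma ee_eq_zero_iff {L : LaurentPolynomial ℂ} : ee L = 0 ↔ L = 0 := by
  constructor
  · intro h
    refine LaurentPolynomial.ext fun k => ?_
    rw [← ee_coeff L k, h]
    rfl
  · rintro rfl; exact map_zero ee

lemma ee_aeval (L : LaurentPolynomial ℂ) (Q : ℂ[X]) :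
    Polynomial.aeval (ee L) Q = ee (Polynomial.aeval L Q) :=
  (Polynomial.aeval_algHom_apply ee L Q)

lemma aeval_invert (L : LaurentPolynomial ℂ) (Q : ℂ[X]) :
    Polynomial.aeval (invert L) Q = invert (Polynomial.aeval L Q) :=
  (Polynomial.aeval_algHom_apply (invert.toAlgHom : LaurentPolynomial ℂ →ₐ[ℂ] _) L Q)

lemma CmulL_apply (a : ℂ) (L : LaurentPolynomial ℂ) (j : ℤ) :
    (LaurentPolynomial.C a * L) j = a * L j := by
  rw [← LaurentPolynomial.single_eq_C]
  exact AddMonoidAlgebra.coeff_single_zero_mul L a j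

-- order of `ee L` equals a lower bound realized
lemma order_ee_eq {L : LaurentPolynomial ℂ} {b : ℤ} (hb : L b ≠ 0)
    (hlow : ∀ k < b, L k = 0) : (ee L).order = b := by
  apply order_eq_of_coeff
  · rw [ee_coeff]; exact hb
  · intro k hk; rw [ee_coeff]; exact hlow k hk

lemma root_LP {n : ℕ} (hn : 1 ≤ n) {A B : ℂ[X]} (hAn : A.natDegree = n)
    (hBn : B.natDegree = n) (L₁ L₂ : LaurentPolynomial ℂ)
    (h : Polynomial.aeval L₁ A = Polynomial.aeval L₂ B)
    {b₁ : ℤ} (hb₁neg : b₁ < 0) (hb₁ : L₁ b₁ ≠ 0) (hlow : ∀ k < b₁, L₁ k = 0) :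
    (L₂ b₁ ≠ 0 ∧ ∀ k < b₁, L₂ k = 0) ∧
      ∃ α β : ℂ, α ≠ 0 ∧ β ≠ 0 ∧ α ^ n = A.leadingCoeff ∧ β ^ n = B.leadingCoeff ∧
        ∀ k : ℤ, k ≠ 0 → k < -b₁ → α * L₁ k = β * L₂ k := by
  have hMord : (ee L₁).order = b₁ := order_ee_eq hb₁ hlow
  have hM : (ee L₁).order < 0 := by rw [hMord]; exact hb₁neg
  have heq : Polynomial.aeval (ee L₁) A = Polynomial.aeval (ee L₂) B := by
    rw [ee_aeval, ee_aeval, h]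
  obtain ⟨hN0, hNord, α, β, hα, hβ, hαn, hβn, hrel⟩ := root_lemma hn hAn hBn hM heq
  rw [hMord] at hNord
  refine ⟨⟨?_, ?_⟩, α, β, hα, hβ, hαn, hβn, ?_⟩
  · rw [← ee_coeff L₂ b₁, ← hNord]
    exact (mt HahnSeries.coeff_order_eq_zero.mp hN0)
  · intro k hk
    rw [← ee_coeff L₂ k]
    exact HahnSeries.coeff_eq_zero_of_lt_order (by rw [hNord]; exact hk)
  · intro k hk0 hkb
    have := hrel k hk0 (by rw [hMord]; exact hkb)
    rwa [ee_coeff, ee_coeff] at this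

lemma aeval_inj (L : LaurentPolynomial ℂ) (hL : ∀ c : ℂ, L ≠ LaurentPolynomial.C c)
    {P Q : ℂ[X]} (h : Polynomial.aeval L P = Polynomial.aeval L Q) : P = Q := by
  have hL0 : L ≠ 0 := fun h0 => hL 0 (by rw [h0, map_zero])
  have hsupp : L.coeff.support.Nonempty := Finsupp.support_nonempty_iff.mpr (mt AddMonoidAlgebra.coeff_eq_zero.mp hL0)
  -- find a nonzero support element
  have hex : ∃ j ∈ L.coeff.support, j ≠ 0 := by
    by_contra hno
    push_neg at hno
    apply hL (L 0)
    refine LaurentPolynomial.ext fun k => ?_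
    rw [LaurentPolynomial.C_apply]
    split
    · next hk => rw [hk]
    · next hk =>
      by_contra hk0
      exact hk (hno k (Finsupp.mem_support_iff.mpr hk0))
  -- reduce to kernel statement
  suffices hker : ∀ R : ℂ[X], Polynomial.aeval L R = 0 → R = 0 by
    have := hker (P - Q) (by rw [map_sub, h, sub_self])
    exact sub_eq_zero.mp this
  intro R hR
  by_contra hR0
  have hlcR : R.leadingCoeff ≠ 0 := Polynomial.leadingCoeff_ne_zero.mpr hR0
  obtain ⟨j, hjs, hj0⟩ := hex
  -- choose a series M with negative order mapping aeval to 0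
  obtain ⟨M, hMord, hMzero⟩ :
      ∃ M : KK, M.order < 0 ∧ Polynomial.aeval M R = 0 := by
    by_cases hcase : 1 ≤ L.coeff.support.max' hsupp
    · refine ⟨ee (invert L), ?_, ?_⟩
      · have : (ee (invert L)).order = -(L.coeff.support.max' hsupp) := by
          apply order_ee_eq
          · rw [LaurentPolynomial.invert_apply]
            rw [neg_neg]
            exact Finsupp.mem_support_iff.mp (L.coeff.support.max'_mem hsupp)
          · intro k hk
            rw [LaurentPolynomial.invert_apply]
            by_contra hne
            have := L.coeff.support.le_max' (-k) (Finsupp.mem_support_iff.mpr hne)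
            omega
        rw [this]; omega
      · rw [ee_aeval, aeval_invert, hR, map_zero, map_zero]
    · refine ⟨ee L, ?_, ?_⟩
      · have hmin : L.coeff.support.min' hsupp ≤ j := L.coeff.support.min'_le j hjs
        have hjt : j ≤ L.coeff.support.max' hsupp := L.coeff.support.le_max' j hjs
        have : (ee L).order = L.coeff.support.min' hsupp := by
          apply order_ee_eq
          · exact Finsupp.mem_support_iff.mp (L.coeff.support.min'_mem hsupp)
          · intro k hk
            by_contra hne
            have := L.coeff.support.min'_le k (Finsupp.mem_support_iff.mpr hne)
            omega
        rw [this]; omega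
      · rw [ee_aeval, hR, map_zero]
  have hM0 : M ≠ 0 := fun h0 => by simp [h0, HahnSeries.order_zero] at hMord
  have hlcM : M.leadingCoeff ≠ 0 := HahnSeries.leadingCoeff_ne_zero.mpr hM0
  have := coeff_aeval_lead R M hMord
  rw [hMzero, HahnSeries.coeff_zero] at this
  exact mul_ne_zero hlcR (pow_ne_zero _ hlcM) this.symm

lemma case_left {A B : ℂ[X]} (L₁ L₂ : LaurentPolynomial ℂ)
    (hL₁ : ∀ c : ℂ, L₁ ≠ LaurentPolynomial.C c)
    (h : Polynomial.aeval L₁ A = Polynomial.aeval L₂ B) {α β : ℂ} (hα : α ≠ 0) (hβ : β ≠ 0)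
    (hrel : ∀ j : ℤ, j ≠ 0 → α * L₁ j = β * L₂ j) :
    ∃ a b : ℂ, a ≠ 0 ∧ A = B.comp (Polynomial.C a * X + Polynomial.C b) ∧
      L₂ = LaurentPolynomial.C a * L₁ + LaurentPolynomial.C b := by
  set a : ℂ := α / β with ha
  set bv : ℂ := L₂ 0 - a * L₁ 0 with hbv
  have ha0 : a ≠ 0 := div_ne_zero hα hβ
  have hL2 : L₂ = LaurentPolynomial.C a * L₁ + LaurentPolynomial.C bv := by
    refine LaurentPolynomial.ext fun k => ?_
    show L₂ k = (LaurentPolynomial.C a * L₁ + LaurentPolynomial.C bv) k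
    rw [AddMonoidAlgebra.coeff_add, Finsupp.add_apply, CmulL_apply, LaurentPolynomial.C_apply]
    by_cases hk : k = 0
    · rw [if_pos hk, hk, hbv]; ring
    · rw [if_neg hk, add_zero, ha, div_mul_eq_mul_div, eq_div_iff hβ]
      linear_combination -(hrel k hk)
  refine ⟨a, bv, ha0, ?_, hL2⟩
  apply aeval_inj L₁ hL₁
  rw [h, Polynomial.aeval_comp]
  have hW : Polynomial.aeval L₁ (Polynomial.C a * X + Polynomial.C bv)
      = LaurentPolynomial.C a * L₁ + LaurentPolynomial.C bv := by
    rw [map_add, map_mul, Polynomial.aeval_X, Polynomial.aeval_C, Polynomial.aeval_C,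
      ← LaurentPolynomial.C_eq_algebraMap, ← LaurentPolynomial.C_eq_algebraMap]
  rw [hW, ← hL2]

lemma aeval_linear_eq (L : LaurentPolynomial ℂ) (r : ℤ) (hr : r ≠ 0)
    (hsupp : ∀ j : ℤ, j ≠ -r → j ≠ 0 → j ≠ r → L j = 0) (s : ℂ) :
    Polynomial.aeval L (Polynomial.C s * X + Polynomial.C (-(s * L 0)))
      = LaurentPolynomial.C (s * L r) * LaurentPolynomial.T r
        + LaurentPolynomial.C (s * L (-r)) * LaurentPolynomial.T (-r) := by
  have hW : Polynomial.aeval L (Polynomial.C s * X + Polynomial.C (-(s * L 0)))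
      = LaurentPolynomial.C s * L + LaurentPolynomial.C (-(s * L 0)) := by
    rw [map_add, map_mul, Polynomial.aeval_X, Polynomial.aeval_C, Polynomial.aeval_C,
      ← LaurentPolynomial.C_eq_algebraMap, ← LaurentPolynomial.C_eq_algebraMap]
  rw [hW, ← LaurentPolynomial.single_eq_C_mul_T, ← LaurentPolynomial.single_eq_C_mul_T]
  refine LaurentPolynomial.ext fun k => ?_
  show (LaurentPolynomial.C s * L + LaurentPolynomial.C (-(s * L 0))) k = _
  rw [AddMonoidAlgebra.coeff_add, AddMonoidAlgebra.coeff_add, Finsupp.add_apply, Finsupp.add_apply, CmulL_apply, LaurentPolynomial.C_apply,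
    AddMonoidAlgebra.coeff_single, Finsupp.single_apply, AddMonoidAlgebra.coeff_single, Finsupp.single_apply]
  split_ifs with h1 h2 h3
  all_goals try (exfalso; omega)
  all_goals try (subst_vars; ring)
  all_goals rw [hsupp k (by omega) (by omega) (by omega)]
  all_goals ring

lemma exists_supp_ne (L : LaurentPolynomial ℂ) (hL : ∀ c : ℂ, L ≠ LaurentPolynomial.C c) :
    ∃ j : ℤ, j ≠ 0 ∧ L j ≠ 0 := by
  by_contra hno
  push_neg at hno
  apply hL (L 0)
  refine LaurentPolynomial.ext fun k => ?_
  rw [LaurentPolynomial.C_apply]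
  split
  · next hk => rw [hk]
  · next hk => exact hno k hk

/-- **Lemma on double decompositions of Laurent polynomials with equal outer degrees.**
If `A ∘ L₁ = B ∘ L₂` for nonconstant complex polynomials `A, B` of the same degree and
nonconstant Laurent polynomials `L₁, L₂`, then either the two decompositions differ by a
degree-one polynomial `w(z) = az + b` (i.e. `A = B ∘ w`, `L₂ = a L₁ + b`), or after
degree-one changes `w₁, w₂` the inner functions become `a^r z^r + a^{-r} z^{-r}` and
`(aν)^r z^r + (aν)^{-r} z^{-r}` for some `r ≥ 1`, `a ≠ 0` and a root of unity `ν`. -/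
theorem laurent_double_decomposition_equal_degrees
    (A B : ℂ[X]) (hA : 1 ≤ A.natDegree) (hB : 1 ≤ B.natDegree)
    (L₁ L₂ : LaurentPolynomial ℂ)
    (hL₁ : ∀ c : ℂ, L₁ ≠ LaurentPolynomial.C c)
    (hL₂ : ∀ c : ℂ, L₂ ≠ LaurentPolynomial.C c)
    (h : Polynomial.aeval L₁ A = Polynomial.aeval L₂ B)
    (hdeg : A.natDegree = B.natDegree) :
    (∃ a b : ℂ, a ≠ 0 ∧
        A = B.comp (Polynomial.C a * X + Polynomial.C b) ∧
        L₂ = LaurentPolynomial.C a * L₁ + LaurentPolynomial.C b) ∨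
    (∃ (r : ℕ) (a ν : ℂ), 1 ≤ r ∧ a ≠ 0 ∧ (∃ k : ℕ, 1 ≤ k ∧ ν ^ k = 1) ∧
        ∃ w₁ w₂ : ℂ[X], w₁.degree = 1 ∧ w₂.degree = 1 ∧
          Polynomial.aeval L₁ w₁ =
            LaurentPolynomial.C (a ^ r) * LaurentPolynomial.T (r : ℤ) +
              LaurentPolynomial.C ((a ^ r)⁻¹) * LaurentPolynomial.T (-(r : ℤ)) ∧
          Polynomial.aeval L₂ w₂ =
            LaurentPolynomial.C ((a * ν) ^ r) * LaurentPolynomial.T (r : ℤ) +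
              LaurentPolynomial.C (((a * ν) ^ r)⁻¹) * LaurentPolynomial.T (-(r : ℤ))) := by
  classical
  have hBn : B.natDegree = A.natDegree := hdeg.symm
  have hL₁0 : L₁ ≠ 0 := fun h0 => hL₁ 0 (by rw [h0, map_zero])
  have hL₂0 : L₂ ≠ 0 := fun h0 => hL₂ 0 (by rw [h0, map_zero])
  have hs₁ : L₁.coeff.support.Nonempty := Finsupp.support_nonempty_iff.mpr (mt AddMonoidAlgebra.coeff_eq_zero.mp hL₁0)
  have hs₂ : L₂.coeff.support.Nonempty := Finsupp.support_nonempty_iff.mpr (mt AddMonoidAlgebra.coeff_eq_zero.mp hL₂0)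
  set t₁ : ℤ := L₁.coeff.support.max' hs₁ with ht₁def
  set b₁ : ℤ := L₁.coeff.support.min' hs₁ with hb₁def
  have ht₁ : L₁ t₁ ≠ 0 := Finsupp.mem_support_iff.mp (L₁.coeff.support.max'_mem hs₁)
  have hb₁ : L₁ b₁ ≠ 0 := Finsupp.mem_support_iff.mp (L₁.coeff.support.min'_mem hs₁)
  have hhight : ∀ k : ℤ, t₁ < k → L₁ k = 0 := by
    intro k hk
    by_contra hne
    have := L₁.coeff.support.le_max' k (Finsupp.mem_support_iff.mpr hne)
    omega
  have hlowb : ∀ k : ℤ, k < b₁ → L₁ k = 0 := by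
    intro k hk
    by_contra hne
    have := L₁.coeff.support.min'_le k (Finsupp.mem_support_iff.mpr hne)
    omega
  obtain ⟨j₁, hj₁0, hj₁⟩ := exists_supp_ne L₁ hL₁
  have hj₁b : b₁ ≤ j₁ := L₁.coeff.support.min'_le j₁ (Finsupp.mem_support_iff.mpr hj₁)
  have hj₁t : j₁ ≤ t₁ := L₁.coeff.support.le_max' j₁ (Finsupp.mem_support_iff.mpr hj₁)
  by_cases hcase : 1 ≤ t₁
  · -- expansion at infinity
    have h' : Polynomial.aeval (invert L₁) A = Polynomial.aeval (invert L₂) B := by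
      rw [aeval_invert, aeval_invert, h]
    have hbI : invert L₁ (-t₁) ≠ 0 := by
      rw [LaurentPolynomial.invert_apply, neg_neg]; exact ht₁
    have hlowI : ∀ k < -t₁, invert L₁ k = 0 := fun k hk => by
      rw [LaurentPolynomial.invert_apply]; exact hhight (-k) (by omega)
    obtain ⟨⟨hiq, hihigh⟩, α, β, hα, hβ, hαn, hβn, hrelI⟩ :=
      root_LP hA rfl hBn (invert L₁) (invert L₂) h' (show -t₁ < 0 by omega) hbI hlowI
    have hq₂ : L₂ t₁ ≠ 0 := by rwa [LaurentPolynomial.invert_apply, neg_neg] at hiq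
    have hhigh₂ : ∀ k : ℤ, t₁ < k → L₂ k = 0 := by
      intro k hk
      have := hihigh (-k) (by omega)
      rwa [LaurentPolynomial.invert_apply, neg_neg] at this
    have hrelInf : ∀ j : ℤ, j ≠ 0 → -t₁ < j → α * L₁ j = β * L₂ j := by
      intro j hj hj2
      have := hrelI (-j) (by omega) (by omega)
      rwa [LaurentPolynomial.invert_apply, LaurentPolynomial.invert_apply, neg_neg] at this
    by_cases hbc : 0 ≤ b₁
    · -- both are polynomials
      have hlow₂ : ∀ k : ℤ, k < 0 → L₂ k = 0 := by
        by_contra hno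
        push_neg at hno
        obtain ⟨k, hk, hkne⟩ := hno
        have hb₂k : L₂.coeff.support.min' hs₂ ≤ k :=
          L₂.coeff.support.min'_le k (Finsupp.mem_support_iff.mpr hkne)
        have hb₂ne : L₂ (L₂.coeff.support.min' hs₂) ≠ 0 :=
          Finsupp.mem_support_iff.mp (L₂.coeff.support.min'_mem hs₂)
        have hb₂low : ∀ m < L₂.coeff.support.min' hs₂, L₂ m = 0 := by
          intro m hm
          by_contra hne
          have := L₂.coeff.support.min'_le m (Finsupp.mem_support_iff.mpr hne)
          omega
        obtain ⟨⟨hL1b₂, _⟩, _⟩ :=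
          root_LP hA hBn rfl L₂ L₁ h.symm (show L₂.coeff.support.min' hs₂ < 0 by omega) hb₂ne hb₂low
        exact hL1b₂ (hlowb _ (by omega))
      left
      apply case_left L₁ L₂ hL₁ h hα hβ
      intro j hj
      by_cases hz1 : L₁ j = 0
      · by_cases hz2 : L₂ j = 0
        · rw [hz1, hz2, mul_zero, mul_zero]
        · have : 0 ≤ j := by by_contra hc; exact hz2 (hlow₂ j (by omega))
          exact hrelInf j hj (by omega)
      · have : b₁ ≤ j := L₁.coeff.support.min'_le j (Finsupp.mem_support_iff.mpr hz1)
        exact hrelInf j hj (by omega)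
    · push_neg at hbc
      obtain ⟨⟨hp₂, hlow₂⟩, α', β', hα', hβ', hα'n, hβ'n, hrel0⟩ :=
        root_LP hA rfl hBn L₁ L₂ h hbc hb₁ hlowb
      rcases lt_trichotomy t₁ (-b₁) with hlt | heqr | hgt
      · -- inner degree at 0 dominates
        left
        apply case_left L₁ L₂ hL₁ h hα' hβ'
        intro j hj
        by_cases hz1 : L₁ j = 0
        · by_cases hz2 : L₂ j = 0
          · rw [hz1, hz2, mul_zero, mul_zero]
          · have : j ≤ t₁ := by by_contra hc; exact hz2 (hhigh₂ j (by omega))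
            exact hrel0 j hj (by omega)
        · have : j ≤ t₁ := by by_contra hc; exact hz1 (hhight j (by omega))
          exact hrel0 j hj (by omega)
      · -- symmetric degrees
        by_cases hprop : α * β' = α' * β
        · left
          apply case_left L₁ L₂ hL₁ h hα hβ
          intro j hj
          rcases lt_or_ge (-t₁) j with hjgt | hjle
          · exact hrelInf j hj hjgt
          · rcases lt_or_eq_of_le hjle with hjlt | hjeq
            · rw [hlowb j (by omega), hlow₂ j (by omega), mul_zero, mul_zero]
            · have e := hrel0 b₁ (by omega) (by omega)
              have h1 : β' * (α * L₁ b₁) = β' * (β * L₂ b₁) := by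
                linear_combination β * e + L₁ b₁ * hprop
              have h2 := mul_left_cancel₀ hβ' h1
              rw [show j = b₁ by omega]
              exact h2
        · -- genuine second case
          right
          have hb₁t : b₁ = -t₁ := by omega
          have hsupp₁ : ∀ j : ℤ, j ≠ -t₁ → j ≠ 0 → j ≠ t₁ → L₁ j = 0 := by
            intro j hjm hj0 hjr
            by_cases hlo : j < -t₁
            · exact hlowb j (by omega)
            by_cases hhi : t₁ < j
            · exact hhight j hhi
            have e1 := hrelInf j hj0 (by omega)
            have e2 := hrel0 j hj0 (by omega)
            have e3 : (α * β' - α' * β) * L₁ j = 0 := by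
              linear_combination β' * e1 - β * e2
            rcases mul_eq_zero.mp e3 with hc | hc
            · exact absurd (by linear_combination hc) hprop
            · exact hc
          have hsupp₂ : ∀ j : ℤ, j ≠ -t₁ → j ≠ 0 → j ≠ t₁ → L₂ j = 0 := by
            intro j hjm hj0 hjr
            by_cases hlo : j < -t₁
            · exact hlow₂ j (by omega)
            by_cases hhi : t₁ < j
            · exact hhigh₂ j hhi
            have e1 := hrelInf j hj0 (by omega)
            rw [hsupp₁ j hjm hj0 hjr, mul_zero] at e1
            exact (mul_eq_zero.mp e1.symm).resolve_left hβ
          have hp₁ : L₁ (-t₁) ≠ 0 := by rw [← hb₁t]; exact hb₁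
          have hp₂' : L₂ (-t₁) ≠ 0 := by rw [← hb₁t]; exact hp₂
          have hqp₁ : L₁ t₁ * L₁ (-t₁) ≠ 0 := mul_ne_zero ht₁ hp₁
          have hqp₂ : L₂ t₁ * L₂ (-t₁) ≠ 0 := mul_ne_zero hq₂ hp₂'
          obtain ⟨s, hs⟩ := IsAlgClosed.exists_pow_nat_eq ((L₁ t₁ * L₁ (-t₁))⁻¹)
            (show 0 < 2 by norm_num)
          obtain ⟨s', hs'⟩ := IsAlgClosed.exists_pow_nat_eq ((L₂ t₁ * L₂ (-t₁))⁻¹)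
            (show 0 < 2 by norm_num)
          have hs0 : s ≠ 0 := fun h0 => (inv_ne_zero hqp₁) (by rw [← hs, h0, zero_pow two_ne_zero])
          have hs'0 : s' ≠ 0 := fun h0 => (inv_ne_zero hqp₂) (by rw [← hs', h0, zero_pow two_ne_zero])
          set r' : ℕ := t₁.toNat with hr'def
          have hr' : (r' : ℤ) = t₁ := Int.toNat_of_nonneg (by omega)
          have hr'1 : 1 ≤ r' := by omega
          obtain ⟨a, ha⟩ := IsAlgClosed.exists_pow_nat_eq (s * L₁ t₁) (show 0 < r' by omega)
          obtain ⟨a', ha'⟩ := IsAlgClosed.exists_pow_nat_eq (s' * L₂ t₁) (show 0 < r' by omega)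
          have ha0 : a ≠ 0 := fun h0 => (mul_ne_zero hs0 ht₁) (by rw [← ha, h0, zero_pow (by omega)])
          have ha'0 : a' ≠ 0 := fun h0 => (mul_ne_zero hs'0 hq₂) (by rw [← ha', h0, zero_pow (by omega)])
          set ν : ℂ := a' / a with hνdef
          have hν0 : ν ≠ 0 := div_ne_zero ha'0 ha0
          have haν : a * ν = a' := by rw [hνdef]; field_simp
          -- corner relations
          have hcr1 : α * L₁ t₁ = β * L₂ t₁ := hrelInf t₁ (by omega) (by omega)
          have hcr2 : α' * L₁ (-t₁) = β' * L₂ (-t₁) := by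
            have := hrel0 b₁ (by omega) (by omega)
            rwa [hb₁t] at this
          -- power identities
          have hA2 : a ^ (2 * r') * L₁ (-t₁) = L₁ t₁ := by
            rw [mul_comm 2 r', pow_mul, ha]
            have : (s * L₁ t₁) ^ 2 * L₁ (-t₁) = s ^ 2 * (L₁ t₁ * L₁ (-t₁)) * L₁ t₁ := by ring
            rw [this, hs, inv_mul_cancel₀ hqp₁, one_mul]
          have hA2' : a' ^ (2 * r') * L₂ (-t₁) = L₂ t₁ := by
            rw [mul_comm 2 r', pow_mul, ha']
            have : (s' * L₂ t₁) ^ 2 * L₂ (-t₁) = s' ^ 2 * (L₂ t₁ * L₂ (-t₁)) * L₂ t₁ := by ring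
            rw [this, hs', inv_mul_cancel₀ hqp₂, one_mul]
          have hpow : a ^ (2 * r') * ν ^ (2 * r') = a' ^ (2 * r') := by
            rw [← mul_pow, haν]
          have hT1 : ν ^ (2 * r') * (β * α') = α * β' := by
            have hcan : a ^ (2 * r') * (L₁ (-t₁) * L₂ (-t₁)) ≠ 0 :=
              mul_ne_zero (pow_ne_zero _ ha0) (mul_ne_zero hp₁ hp₂')
            apply mul_right_cancel₀ hcan
            linear_combination (β * α' * L₁ (-t₁) * L₂ (-t₁)) * hpow
              + (β * α' * L₁ (-t₁)) * hA2' + (α' * L₁ (-t₁)) * hcr1.symm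
              + (α * L₁ t₁) * hcr2 - (α * β' * L₂ (-t₁)) * hA2
          have hν1 : ν ^ (2 * r' * A.natDegree) = 1 := by
            have h6 : (ν ^ (2 * r')) ^ A.natDegree * (β * α') ^ A.natDegree
                = (α * β') ^ A.natDegree := by
              rw [← mul_pow, hT1]
            rw [mul_pow β α', mul_pow α β', hβn, hα'n, hαn, hβ'n] at h6
            have h7 : (ν ^ (2 * r')) ^ A.natDegree * (B.leadingCoeff * A.leadingCoeff)
                = 1 * (B.leadingCoeff * A.leadingCoeff) := by rw [one_mul, h6]; ring
            have h8 := mul_right_cancel₀ (mul_ne_zero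
              (Polynomial.leadingCoeff_ne_zero.mpr (fun h0 => by
                rw [h0, Polynomial.natDegree_zero] at hBn; omega))
              (Polynomial.leadingCoeff_ne_zero.mpr (fun h0 => by
                rw [h0, Polynomial.natDegree_zero] at hA; omega))) h7
            rw [pow_mul]
            exact h8
          have hinv : (a ^ r')⁻¹ = s * L₁ (-t₁) := by
            apply inv_eq_of_mul_eq_one_right
            rw [ha, show s * L₁ t₁ * (s * L₁ (-t₁)) = s ^ 2 * (L₁ t₁ * L₁ (-t₁)) by ring, hs,
              inv_mul_cancel₀ hqp₁]
          have hinv' : (a' ^ r')⁻¹ = s' * L₂ (-t₁) := by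
            apply inv_eq_of_mul_eq_one_right
            rw [ha', show s' * L₂ t₁ * (s' * L₂ (-t₁)) = s' ^ 2 * (L₂ t₁ * L₂ (-t₁)) by ring, hs',
              inv_mul_cancel₀ hqp₂]
          refine ⟨r', a, ν, hr'1, ha0, ⟨2 * r' * A.natDegree, Nat.one_le_iff_ne_zero.mpr (Nat.mul_ne_zero (Nat.mul_ne_zero two_ne_zero (by omega)) (by omega)), hν1⟩,
            Polynomial.C s * X + Polynomial.C (-(s * L₁ 0)),
            Polynomial.C s' * X + Polynomial.C (-(s' * L₂ 0)),
            Polynomial.degree_linear hs0, Polynomial.degree_linear hs'0, ?_, ?_⟩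
          · rw [aeval_linear_eq L₁ t₁ (by omega) hsupp₁ s, hinv, ha, hr']
          · rw [aeval_linear_eq L₂ t₁ (by omega) hsupp₂ s']
            rw [show (a * ν) ^ r' = a' ^ r' by rw [haν], hinv', ha', hr']
      · -- inner degree at infinity dominates
        left
        apply case_left L₁ L₂ hL₁ h hα hβ
        intro j hj
        by_cases hz1 : L₁ j = 0
        · by_cases hz2 : L₂ j = 0
          · rw [hz1, hz2, mul_zero, mul_zero]
          · have : b₁ ≤ j := by by_contra hc; exact hz2 (hlow₂ j (by omega))
            exact hrelInf j hj (by omega)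
        · have : b₁ ≤ j := by by_contra hc; exact hz1 (hlowb j (by omega))
          exact hrelInf j hj (by omega)
  · -- t₁ ≤ 0 : both only have negative part
    have hb₁neg : b₁ < 0 := by omega
    obtain ⟨⟨hp₂, hlow₂⟩, α', β', hα', hβ', hα'n, hβ'n, hrel0⟩ :=
      root_LP hA rfl hBn L₁ L₂ h hb₁neg hb₁ hlowb
    have hhigh₂' : ∀ k : ℤ, 0 < k → L₂ k = 0 := by
      by_contra hno
      push_neg at hno
      obtain ⟨k, hk, hkne⟩ := hno
      have hkt₂ : k ≤ L₂.coeff.support.max' hs₂ :=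
        L₂.coeff.support.le_max' k (Finsupp.mem_support_iff.mpr hkne)
      have h' : Polynomial.aeval (invert L₂) B = Polynomial.aeval (invert L₁) A := by
        rw [aeval_invert, aeval_invert, h]
      have hbI : invert L₂ (-(L₂.coeff.support.max' hs₂)) ≠ 0 := by
        rw [LaurentPolynomial.invert_apply, neg_neg]
        exact Finsupp.mem_support_iff.mp (L₂.coeff.support.max'_mem hs₂)
      have hlowI : ∀ m < -(L₂.coeff.support.max' hs₂), invert L₂ m = 0 := by
        intro m hm
        rw [LaurentPolynomial.invert_apply]
        by_contra hne
        have := L₂.coeff.support.le_max' (-m) (Finsupp.mem_support_iff.mpr hne)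
        omega
      obtain ⟨⟨hL1t₂, _⟩, _⟩ :=
        root_LP hA hBn rfl (invert L₂) (invert L₁) h'
          (show -(L₂.coeff.support.max' hs₂) < 0 by omega) hbI hlowI
      apply hL1t₂
      rw [LaurentPolynomial.invert_apply, neg_neg]
      exact hhight _ (by omega)
    left
    apply case_left L₁ L₂ hL₁ h hα' hβ'
    intro j hj
    by_cases hz1 : L₁ j = 0
    · by_cases hz2 : L₂ j = 0
      · rw [hz1, hz2, mul_zero, mul_zero]
      · have : j ≤ 0 := by by_contra hc; exact hz2 (hhigh₂' j (by omega))
        exact hrel0 j hj (by omega)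
    · have : j ≤ t₁ := by by_contra hc; exact hz1 (hhight j (by omega))
      exact hrel0 j hj (by omega)
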